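/- Let n ∈ ℕ and let μ^l, μ^k ∈ ℝⁿ satisfy μ^k_i ≤ μ^l_i for all i ∈ {1,…,n}. Let x ∈ ℝⁿ satisfy x_i ≠ μ^l_i and x_i ≠ μ^k_i for all i ∈ {1,…,n}. Then α · (Λ^α_{μ^l}(x) · Λ^α_{μ^k}(x) − Λ^α_{μ^l}(x)) → 0 as α → ∞; that is, the α-scaled error of approximating the product of the two conjunctive logistic functions by the conjunctive logistic function with the componentwise-larger center converges to zero as the steepness parameter tends to infinity. -/

import Mathlib

open Filter Topology

/-- The logistic function with steepness `α` and center `μ`. -/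
noncomputable def logistic (α μ x : ℝ) : ℝ := 1 / (1 + Real.exp (-α * (x - μ)))

/-- The multivariate conjunctive logistic function with center vector `v`. -/
noncomputable def mvLogistic {n : ℕ} (α : ℝ) (v x : Fin n → ℝ) : ℝ :=
  ∏ i, logistic α (v i) (x i)

lemma logistic_pos (α μ x : ℝ) : 0 < logistic α μ x := by
  unfold logistic; positivity

lemma logistic_le_one (α μ x : ℝ) : logistic α μ x ≤ 1 := by
  unfold logistic
  rw [div_le_one (by positivity)]
  nlinarith [Real.exp_pos (-α * (x - μ))]

lemma logistic_le_exp (α μ x : ℝ) : logistic α μ x ≤ Real.exp (α * (x - μ)) := by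
  unfold logistic
  rw [div_le_iff₀ (by positivity)]
  have h := Real.exp_pos (α * (x - μ))
  have h2 : Real.exp (α * (x - μ)) * Real.exp (-α * (x - μ)) = 1 := by
    rw [← Real.exp_add]; ring_nf; exact Real.exp_zero
  nlinarith

lemma one_sub_logistic_le (α μ x : ℝ) :
    1 - logistic α μ x ≤ Real.exp (-α * (x - μ)) := by
  unfold logistic
  have h := Real.exp_pos (-α * (x - μ))
  have heq : 1 - 1 / (1 + Real.exp (-α * (x - μ))) =
      Real.exp (-α * (x - μ)) / (1 + Real.exp (-α * (x - μ))) := by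
    field_simp
    ring
  rw [heq]
  exact div_le_self h.le (by linarith)

lemma mvLogistic_pos {n : ℕ} (α : ℝ) (v x : Fin n → ℝ) : 0 < mvLogistic α v x :=
  Finset.prod_pos fun i _ => logistic_pos α (v i) (x i)

lemma mvLogistic_le_one {n : ℕ} (α : ℝ) (v x : Fin n → ℝ) : mvLogistic α v x ≤ 1 :=
  Finset.prod_le_one (fun i _ => (logistic_pos α (v i) (x i)).le)
    (fun i _ => logistic_le_one α (v i) (x i))

lemma mvLogistic_le {n : ℕ} (α : ℝ) (v x : Fin n → ℝ) (i : Fin n) :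
    mvLogistic α v x ≤ logistic α (v i) (x i) := by
  unfold mvLogistic
  rw [← Finset.mul_prod_erase Finset.univ _ (Finset.mem_univ i)]
  exact mul_le_of_le_one_right (logistic_pos α (v i) (x i)).le
    (Finset.prod_le_one (fun j _ => (logistic_pos α (v j) (x j)).le)
      (fun j _ => logistic_le_one α (v j) (x j)))

lemma one_sub_prod_le_sum {ι : Type*} (s : Finset ι) (f : ι → ℝ)
    (h0 : ∀ i ∈ s, 0 ≤ f i) (h1 : ∀ i ∈ s, f i ≤ 1) :
    1 - ∏ i ∈ s, f i ≤ ∑ i ∈ s, (1 - f i) := by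
  induction s using Finset.cons_induction with
  | empty => simp
  | cons a s hni ih =>
    rw [Finset.prod_cons, Finset.sum_cons]
    have hp0 : 0 ≤ ∏ i ∈ s, f i :=
      Finset.prod_nonneg fun i hi => h0 i (Finset.mem_cons_of_mem hi)
    have hp1 : ∏ i ∈ s, f i ≤ 1 :=
      Finset.prod_le_one (fun i hi => h0 i (Finset.mem_cons_of_mem hi))
        (fun i hi => h1 i (Finset.mem_cons_of_mem hi))
    have ha0 := h0 a (Finset.mem_cons_self a s)
    have ha1 := h1 a (Finset.mem_cons_self a s)
    have := ih (fun i hi => h0 i (Finset.mem_cons_of_mem hi))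
      (fun i hi => h1 i (Finset.mem_cons_of_mem hi))
    nlinarith

lemma tendsto_mul_exp_neg (d : ℝ) (hd : 0 < d) :
    Tendsto (fun α : ℝ => α * Real.exp (-α * d)) atTop (𝓝 0) := by
  have h1 : Tendsto (fun y : ℝ => y ^ 1 * Real.exp (-y)) atTop (𝓝 0) :=
    Real.tendsto_pow_mul_exp_neg_atTop_nhds_zero 1
  have h2 : Tendsto (fun α : ℝ => d * α) atTop atTop :=
    tendsto_atTop_atTop_of_monotone' (fun a b hab => by nlinarith) (by
      intro h
      obtain ⟨C, hC⟩ := h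
      have := hC (Set.mem_range_self ((C + 1) / d))
      rw [mul_div_cancel₀ _ hd.ne'] at this
      linarith)
  have h3 := (h1.comp h2).const_mul (1 / d)
  rw [mul_zero] at h3
  convert h3 using 2 with α
  simp only [Function.comp_apply, pow_one]
  field_simp

/-- If `μᵏ ≤ μˡ` componentwise and `x` avoids all the centers'
coordinates, then the `α`-scaled error of approximating `Λ^α_{μˡ} Λ^α_{μᵏ}` by the
dictionary function with the larger center, `Λ^α_{μˡ}`, vanishes as `α → ∞`. -/
theorem mvLogistic_scaled_error_tendsto_zero {n : ℕ} (μl μk : Fin n → ℝ)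
    (hord : ∀ i, μk i ≤ μl i) (x : Fin n → ℝ)
    (hxl : ∀ i, x i ≠ μl i) (hxk : ∀ i, x i ≠ μk i) :
    Tendsto (fun α : ℝ =>
        α * (mvLogistic α μl x * mvLogistic α μk x - mvLogistic α μl x))
      atTop (𝓝 0) := by
  rw [tendsto_zero_iff_abs_tendsto_zero]
  by_cases hc : ∃ i, x i < μl i
  · obtain ⟨i, hi⟩ := hc
    apply squeeze_zero' (Eventually.of_forall fun α => abs_nonneg _)
      (g := fun α => α * Real.exp (-α * (μl i - x i)))
    · filter_upwards [eventually_ge_atTop (0:ℝ)] with α hα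
      have hΛl := mvLogistic_pos α μl x
      have hΛl1 := mvLogistic_le_one α μl x
      have hΛk := mvLogistic_pos α μk x
      have hΛk1 := mvLogistic_le_one α μk x
      have hb : mvLogistic α μl x ≤ Real.exp (-α * (μl i - x i)) :=
        (mvLogistic_le α μl x i).trans (by
          have := logistic_le_exp α (μl i) (x i)
          rw [show -α * (μl i - x i) = α * (x i - μl i) by ring]; exact this)
      rw [abs_mul, abs_of_nonneg hα, abs_of_nonpos (by nlinarith)]
      have h1 : α * (mvLogistic α μl x * (1 - mvLogistic α μk x)) ≤
          α * mvLogistic α μl x := by nlinarith [mul_nonneg (mul_nonneg hα hΛl.le) hΛk.le]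
      have h2 : α * mvLogistic α μl x ≤ α * Real.exp (-α * (μl i - x i)) :=
        mul_le_mul_of_nonneg_left hb hα
      nlinarith
    · exact tendsto_mul_exp_neg _ (by linarith)
  · push_neg at hc
    have hgt : ∀ i, μk i < x i := fun i =>
      lt_of_le_of_lt (hord i) (lt_of_le_of_ne (hc i) (Ne.symm (hxl i)))
    apply squeeze_zero' (Eventually.of_forall fun α => abs_nonneg _)
      (g := fun α => ∑ i, α * Real.exp (-α * (x i - μk i)))
    · filter_upwards [eventually_ge_atTop (0:ℝ)] with α hα
      have hΛl := mvLogistic_pos α μl x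
      have hΛl1 := mvLogistic_le_one α μl x
      have hΛk := mvLogistic_pos α μk x
      have hΛk1 := mvLogistic_le_one α μk x
      rw [abs_mul, abs_of_nonneg hα, abs_of_nonpos (by nlinarith)]
      have hsum : 1 - mvLogistic α μk x ≤ ∑ i, (1 - logistic α (μk i) (x i)) :=
        one_sub_prod_le_sum _ _ (fun i _ => (logistic_pos _ _ _).le)
          (fun i _ => logistic_le_one _ _ _)
      have hsum2 : ∑ i, (1 - logistic α (μk i) (x i)) ≤
          ∑ i, Real.exp (-α * (x i - μk i)) :=
        Finset.sum_le_sum fun i _ => one_sub_logistic_le α (μk i) (x i)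
      rw [← Finset.mul_sum]
      have hstep : mvLogistic α μl x * (1 - mvLogistic α μk x) ≤
          1 - mvLogistic α μk x := by nlinarith
      have h2 : α * (mvLogistic α μl x * (1 - mvLogistic α μk x)) ≤
          α * (∑ i, Real.exp (-α * (x i - μk i))) :=
        mul_le_mul_of_nonneg_left (by linarith) hα
      nlinarith
    · rw [show (0:ℝ) = ∑ _i : Fin n, (0:ℝ) by simp]
      exact tendsto_finset_sum _ fun i _ =>
        tendsto_mul_exp_neg _ (by have := hgt i; linarith)
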